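/- For every signed permutation σ of length n, al(σ) + crs(σ) = (n - fwex(σ)/2)(wex(σ) - 1 + neg(σ)) + neg(σ)·wex(σ)/2, where fwex(σ) = 2·wex(σ) + neg(σ). -/

import Mathlib

open Finset Equiv

/-- A signed permutation of length `n`: a bijection of `ℤ` satisfying `σ(-i) = -σ(i)`
which only moves elements of `{±1,…,±n}`. -/
def IsSignedPerm (n : ℕ) (σ : Equiv.Perm ℤ) : Prop :=
  (∀ i : ℤ, σ (-i) = -σ i) ∧ ∀ i : ℤ, (n : ℤ) < |i| → σ i = i

noncomputable def pairsB (n : ℕ) : Finset (ℤ × ℤ) := Finset.Icc 1 (n : ℤ) ×ˢ Finset.Icc 1 (n : ℤ)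

noncomputable def wexB (n : ℕ) (σ : Equiv.Perm ℤ) : ℕ :=
  ((Finset.Icc 1 (n : ℤ)).filter fun i => i ≤ σ i).card

noncomputable def dropB (n : ℕ) (σ : Equiv.Perm ℤ) : ℕ :=
  ((Finset.Icc 1 (n : ℤ)).filter fun i => σ i < i).card

noncomputable def negB (n : ℕ) (σ : Equiv.Perm ℤ) : ℕ :=
  ((Finset.Icc 1 (n : ℤ)).filter fun i => σ i < 0).card

noncomputable def fwexB (n : ℕ) (σ : Equiv.Perm ℤ) : ℕ := 2 * wexB n σ + negB n σ

noncomputable def alNestB (n : ℕ) (σ : Equiv.Perm ℤ) : ℕ :=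
  ((pairsB n).filter fun p =>
    (-p.1 < -p.2 ∧ -p.2 < -σ p.2 ∧ -σ p.2 < -σ p.1) ∨
    (-p.1 < p.2 ∧ p.2 ≤ σ p.2 ∧ σ p.2 < -σ p.1) ∨
    (p.1 < p.2 ∧ p.2 ≤ σ p.2 ∧ σ p.2 < σ p.1)).card

noncomputable def alENB (n : ℕ) (σ : Equiv.Perm ℤ) : ℕ :=
  ((pairsB n).filter fun p =>
    (-p.1 < 0 ∧ 0 < -σ p.1 ∧ -σ p.1 < σ p.2 ∧ σ p.2 < p.2) ∨
    (p.1 ≤ σ p.1 ∧ σ p.1 < σ p.2 ∧ σ p.2 < p.2)).card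

noncomputable def alNEB (n : ℕ) (σ : Equiv.Perm ℤ) : ℕ :=
  ((pairsB n).filter fun p => σ p.1 < p.1 ∧ p.1 < p.2 ∧ p.2 ≤ σ p.2).card

noncomputable def alB (n : ℕ) (σ : Equiv.Perm ℤ) : ℕ := alNestB n σ + alENB n σ + alNEB n σ

noncomputable def crsB (n : ℕ) (σ : Equiv.Perm ℤ) : ℕ :=
  ((pairsB n).filter fun p =>
    (p.1 < p.2 ∧ p.2 ≤ σ p.1 ∧ σ p.1 < σ p.2) ∨
    (-p.1 < -p.2 ∧ -p.2 < -σ p.1 ∧ -σ p.1 < -σ p.2) ∨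
    (-p.1 < p.2 ∧ p.2 ≤ -σ p.1 ∧ -σ p.1 < σ p.2)).card

noncomputable def invB (n : ℕ) (σ : Equiv.Perm ℤ) : ℕ :=
  ((pairsB n).filter fun p => p.1 < p.2 ∧ σ p.2 < σ p.1).card +
  ((pairsB n).filter fun p => p.1 ≤ p.2 ∧ σ p.2 < σ (-p.1)).card

/-- The generator `s₀` : sign change at 1. -/
def s0B : Equiv.Perm ℤ := Equiv.swap 1 (-1)

/-- The generator `sᵢ = (i, i+1)` acting as a signed permutation. -/
def sB (i : ℤ) : Equiv.Perm ℤ := Equiv.swap i (i + 1) * Equiv.swap (-i) (-(i + 1))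

/-- The Coxeter generators of `Bₙ`. -/
def gensB (n : ℕ) : Set (Equiv.Perm ℤ) :=
  {g | g = s0B ∨ ∃ i : ℤ, 1 ≤ i ∧ i ≤ (n : ℤ) - 1 ∧ g = sB i}

/-- Coxeter length: minimal number of generators expressing `σ`. -/
noncomputable def lenB (n : ℕ) (σ : Equiv.Perm ℤ) : ℕ :=
  sInf {k | ∃ w : List (Equiv.Perm ℤ), (∀ g ∈ w, g ∈ gensB n) ∧ w.length = k ∧ w.prod = σ}


namespace AlCrs

variable {n : ℕ} {σ : Equiv.Perm ℤ}

lemma sp_zero (hσ : IsSignedPerm n σ) : σ 0 = 0 := by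
  have h := hσ.1 0
  rw [neg_zero] at h
  omega

lemma sp_ne_zero (hσ : IsSignedPerm n σ) {i : ℤ} (hi : i ∈ Icc (1:ℤ) n) : σ i ≠ 0 := by
  intro h
  have h2 : i = 0 := σ.injective (by rw [h, sp_zero hσ])
  have := (mem_Icc.mp hi).1
  omega

lemma sp_abs_le (hσ : IsSignedPerm n σ) {i : ℤ} (hi : i ∈ Icc (1:ℤ) n) : |σ i| ≤ (n:ℤ) := by
  by_contra h
  push_neg at h
  have h2 := hσ.2 (σ i) h
  have h3 : σ i = i := σ.injective h2
  have h4 := mem_Icc.mp hi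
  rw [h3, abs_of_nonneg (by omega)] at h
  omega

lemma sp_abs_pos (hσ : IsSignedPerm n σ) {i : ℤ} (hi : i ∈ Icc (1:ℤ) n) : 1 ≤ |σ i| :=
  Int.one_le_abs (sp_ne_zero hσ hi)

lemma sp_abs_inj (hσ : IsSignedPerm n σ) {i j : ℤ} (hi : i ∈ Icc (1:ℤ) n)
    (hj : j ∈ Icc (1:ℤ) n) (h : |σ i| = |σ j|) : i = j := by
  rcases abs_eq_abs.mp h with h1 | h1
  · exact σ.injective h1
  · have h2 : σ i = σ (-j) := by rw [hσ.1 j, h1]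
    have h3 := σ.injective h2
    have := mem_Icc.mp hi
    have := mem_Icc.mp hj
    omega

lemma sp_ne_neg (hσ : IsSignedPerm n σ) {i j : ℤ} (hi : i ∈ Icc (1:ℤ) n)
    (hj : j ∈ Icc (1:ℤ) n) : σ j ≠ -σ i := by
  intro h
  have h2 : σ j = σ (-i) := by rw [hσ.1 i, h]
  have h3 := σ.injective h2
  have := mem_Icc.mp hi
  have := mem_Icc.mp hj
  omega

lemma sp_symm (hσ : IsSignedPerm n σ) : IsSignedPerm n σ.symm := by
  constructor
  · intro i
    apply σ.injective
    rw [Equiv.apply_symm_apply, hσ.1, Equiv.apply_symm_apply]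
  · intro i h
    have h2 := hσ.2 i h
    apply σ.injective
    rw [Equiv.apply_symm_apply]
    conv_lhs => rw [← h2]

open Classical in
noncomputable def cnt (n : ℕ) (P : ℤ → ℤ → Prop) : ℕ :=
  ∑ i ∈ Icc (1:ℤ) n, ∑ j ∈ Icc (1:ℤ) n, if P i j then 1 else 0

open Classical in
noncomputable def cnt1 (n : ℕ) (a : ℤ → Prop) : ℕ :=
  ∑ i ∈ Icc (1:ℤ) n, if a i then 1 else 0

lemma cnt1_filter (a : ℤ → Prop) [DecidablePred a] :
    ((Icc (1:ℤ) n).filter a).card = cnt1 n a := by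
  rw [Finset.card_filter, cnt1]
  refine Finset.sum_congr rfl fun i _ => ?_
  by_cases h : a i
  · rw [if_pos h, if_pos h]
  · rw [if_neg h, if_neg h]

open Classical in
lemma cnt_pairs (P : ℤ → ℤ → Prop) :
    cnt n P = ∑ p ∈ pairsB n, if P p.1 p.2 then (1:ℕ) else 0 := by
  rw [pairsB, Finset.sum_product]; rfl

lemma cnt_filter (P : ℤ → ℤ → Prop) [DecidablePred fun p : ℤ × ℤ => P p.1 p.2] :
    ((pairsB n).filter fun p => P p.1 p.2).card = cnt n P := by
  rw [Finset.card_filter, cnt_pairs]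
  refine Finset.sum_congr rfl fun p _ => ?_
  by_cases h : P p.1 p.2
  · rw [if_pos h, if_pos h]
  · rw [if_neg h, if_neg h]

lemma cnt_swap (P : ℤ → ℤ → Prop) : cnt n P = cnt n fun i j => P j i :=
  Finset.sum_comm

lemma cnt_congr (P Q : ℤ → ℤ → Prop)
    (h : ∀ i ∈ Icc (1:ℤ) n, ∀ j ∈ Icc (1:ℤ) n, P i j ↔ Q i j) : cnt n P = cnt n Q := by
  refine Finset.sum_congr rfl fun i hi => Finset.sum_congr rfl fun j hj => ?_
  by_cases hP : P i j
  · rw [if_pos hP, if_pos ((h i hi j hj).mp hP)]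
  · rw [if_neg hP, if_neg fun hq => hP ((h i hi j hj).mpr hq)]

lemma cnt1_congr (a b : ℤ → Prop) (h : ∀ i ∈ Icc (1:ℤ) n, a i ↔ b i) :
    cnt1 n a = cnt1 n b := by
  refine Finset.sum_congr rfl fun i hi => ?_
  by_cases hP : a i
  · rw [if_pos hP, if_pos ((h i hi).mp hP)]
  · rw [if_neg hP, if_neg fun hq => hP ((h i hi).mpr hq)]

lemma cnt_rect (a b : ℤ → Prop) :
    cnt n (fun i j => a i ∧ b j) = cnt1 n a * cnt1 n b := by
  simp only [cnt, cnt1]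
  rw [Finset.sum_mul]
  refine Finset.sum_congr rfl fun i _ => ?_
  by_cases h : a i
  · rw [if_pos h, one_mul]
    refine Finset.sum_congr rfl fun j _ => ?_
    by_cases hb : b j
    · rw [if_pos ⟨h, hb⟩, if_pos hb]
    · rw [if_neg fun hc => hb hc.2, if_neg hb]
  · rw [if_neg h, zero_mul]
    exact Finset.sum_eq_zero fun j _ => if_neg fun hc => h hc.1

lemma cnt_diag (a b : ℤ → Prop) :
    cnt n (fun i j => a i ∧ b j ∧ i = j) = cnt1 n fun i => a i ∧ b i := by
  simp only [cnt, cnt1]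
  refine Finset.sum_congr rfl fun i hi => ?_
  rw [Finset.sum_eq_single_of_mem i hi (fun c _ hne => if_neg (by
    rintro ⟨-, -, h⟩; exact hne h.symm))]
  by_cases h : a i ∧ b i
  · rw [if_pos ⟨h.1, h.2, rfl⟩, if_pos h]
  · rw [if_neg fun hc => h ⟨hc.1, hc.2.1⟩, if_neg h]

lemma cnt_dg (a : ℤ → Prop) (f : ℤ → ℤ)
    (h : ∀ i ∈ Icc (1:ℤ) n, a i → f i ∈ Icc (1:ℤ) n) :
    cnt n (fun i j => a i ∧ j = f i) = cnt1 n a := by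
  simp only [cnt, cnt1]
  refine Finset.sum_congr rfl fun i hi => ?_
  by_cases ha : a i
  · rw [Finset.sum_eq_single_of_mem (f i) (h i hi ha) (fun c _ hne => if_neg (by
      rintro ⟨-, h2⟩; exact hne h2))]
    rw [if_pos ⟨ha, rfl⟩, if_pos ha]
  · rw [if_neg ha]
    exact Finset.sum_eq_zero fun j _ => if_neg fun hc => ha hc.1

lemma sum_tau (hσ : IsSignedPerm n σ) (m : ℤ) :
    (∑ i ∈ Icc (1:ℤ) n, if |σ i| < m then (1:ℕ) else 0)
      = ∑ i ∈ Icc (1:ℤ) n, if i < m then 1 else 0 := by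
  rw [← Finset.card_filter, ← Finset.card_filter]
  apply Finset.card_bij (fun a _ => |σ a|)
  · intro a ha
    rw [mem_filter] at ha ⊢
    refine ⟨mem_Icc.mpr ⟨sp_abs_pos hσ ha.1, sp_abs_le hσ ha.1⟩, ha.2⟩
  · intro a ha b hb h
    rw [mem_filter] at ha hb
    exact sp_abs_inj hσ ha.1 hb.1 h
  · intro b hb
    rw [mem_filter] at hb
    have hb1 := mem_Icc.mp hb.1
    have hu : σ.symm b ∈ Icc (1:ℤ) (n:ℤ) ∨ -σ.symm b ∈ Icc (1:ℤ) (n:ℤ) := by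
      have h1 := sp_abs_pos (sp_symm hσ) hb.1
      have h2 := sp_abs_le (sp_symm hσ) hb.1
      rcases abs_cases (σ.symm b) with ⟨he, -⟩ | ⟨he, -⟩
      · left; exact mem_Icc.mpr (by omega)
      · right; exact mem_Icc.mpr (by omega)
    rcases hu with hu | hu
    · have habs : |σ (σ.symm b)| = b := by
        rw [Equiv.apply_symm_apply, abs_of_nonneg (by omega)]
      exact ⟨σ.symm b, mem_filter.mpr ⟨hu, by rw [habs]; exact hb.2⟩, habs⟩
    · have habs : |σ (-σ.symm b)| = b := by
        rw [hσ.1, Equiv.apply_symm_apply, abs_neg, abs_of_nonneg (by omega)]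
      exact ⟨-σ.symm b, mem_filter.mpr ⟨hu, by rw [habs]; exact hb.2⟩, habs⟩

lemma cnt_tau (hσ : IsSignedPerm n σ) (c : ℤ → Prop) (m : ℤ → ℤ) :
    cnt n (fun i j => c j ∧ |σ i| < m j) = cnt n (fun i j => c j ∧ i < m j) := by
  simp only [cnt]
  rw [Finset.sum_comm]
  conv_rhs => rw [Finset.sum_comm]
  refine Finset.sum_congr rfl fun j _ => ?_
  by_cases h : c j
  · simp only [h, true_and]
    exact sum_tau hσ (m j)
  · simp [h]

lemma ptw (hσ : IsSignedPerm n σ) {F G : ℤ × ℤ → ℕ}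
    (h : ∀ i j : ℤ, 1 ≤ i → i ≤ n → 1 ≤ j → j ≤ n →
      (|σ i| = σ i ∨ |σ i| = -σ i) → (|σ j| = σ j ∨ |σ j| = -σ j) →
      1 ≤ |σ i| → |σ i| ≤ n → 1 ≤ |σ j| → |σ j| ≤ n →
      (σ i = σ j ↔ i = j) → (|σ i| = |σ j| ↔ i = j) →
      σ j ≠ -σ i → σ i ≠ -σ j →
      F (i, j) = G (i, j)) :
    (∑ p ∈ pairsB n, F p) = ∑ p ∈ pairsB n, G p := by
  refine Finset.sum_congr rfl fun p hp => ?_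
  rw [pairsB] at hp
  obtain ⟨i, j⟩ := p
  obtain ⟨hp1, hp2⟩ := Finset.mem_product.mp hp
  have h1 := mem_Icc.mp hp1
  have h2 := mem_Icc.mp hp2
  exact h i j h1.1 h1.2 h2.1 h2.2 (abs_choice (σ i)) (abs_choice (σ j))
    (sp_abs_pos hσ hp1) (sp_abs_le hσ hp1) (sp_abs_pos hσ hp2) (sp_abs_le hσ hp2)
    ⟨fun hh => σ.injective hh, fun hh => by rw [hh]⟩
    ⟨sp_abs_inj hσ hp1 hp2, fun hh => by rw [hh]⟩
    (sp_ne_neg hσ hp1 hp2) (sp_ne_neg hσ hp2 hp1)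

end AlCrs

set_option maxHeartbeats 4000000

open AlCrs

theorem al_add_crs (n : ℕ) (σ : Equiv.Perm ℤ) (hσ : IsSignedPerm n σ) :
    ((alB n σ + crsB n σ : ℕ) : ℚ) =
      ((n : ℚ) - (fwexB n σ : ℚ) / 2) * ((wexB n σ : ℚ) - 1 + (negB n σ : ℚ)) +
        (negB n σ : ℚ) * (wexB n σ : ℚ) / 2 := by
  -- bridges to cnt
  have hcrs : crsB n σ = cnt n (fun i j =>
      (i < j ∧ j ≤ σ i ∧ σ i < σ j) ∨
      (-i < -j ∧ -j < -σ i ∧ -σ i < -σ j) ∨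
      (-i < j ∧ j ≤ -σ i ∧ -σ i < σ j)) := by
    unfold crsB
    exact cnt_filter (fun i j =>
      (i < j ∧ j ≤ σ i ∧ σ i < σ j) ∨
      (-i < -j ∧ -j < -σ i ∧ -σ i < -σ j) ∨
      (-i < j ∧ j ≤ -σ i ∧ -σ i < σ j))
  have hnest : alNestB n σ = cnt n (fun i j =>
      (-i < -j ∧ -j < -σ j ∧ -σ j < -σ i) ∨
      (-i < j ∧ j ≤ σ j ∧ σ j < -σ i) ∨
      (i < j ∧ j ≤ σ j ∧ σ j < σ i)) := by
    unfold alNestB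
    exact cnt_filter (fun i j =>
      (-i < -j ∧ -j < -σ j ∧ -σ j < -σ i) ∨
      (-i < j ∧ j ≤ σ j ∧ σ j < -σ i) ∨
      (i < j ∧ j ≤ σ j ∧ σ j < σ i))
  have hen : alENB n σ = cnt n (fun i j =>
      (-i < 0 ∧ 0 < -σ i ∧ -σ i < σ j ∧ σ j < j) ∨
      (i ≤ σ i ∧ σ i < σ j ∧ σ j < j)) := by
    unfold alENB
    exact cnt_filter (fun i j =>
      (-i < 0 ∧ 0 < -σ i ∧ -σ i < σ j ∧ σ j < j) ∨
      (i ≤ σ i ∧ σ i < σ j ∧ σ j < j))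
  have hne : alNEB n σ = cnt n (fun i j => σ i < i ∧ i < j ∧ j ≤ σ j) := by
    unfold alNEB
    exact cnt_filter (fun i j => σ i < i ∧ i < j ∧ j ≤ σ j)
  -- disjunct splitting / merging
  have q1 : crsB n σ + alNestB n σ =
      cnt n (fun i j => i < j ∧ j ≤ σ i ∧ j ≤ σ j) +
      cnt n (fun i j => σ i < 0 ∧ j ≤ σ j ∧ j ≤ -σ i) +
      cnt n (fun i j => j < i ∧ σ i < j ∧ σ j < j) := by
    rw [hcrs, hnest]
    simp only [cnt_pairs]
    repeat rw [← Finset.sum_add_distrib]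
    refine ptw hσ ?_
    intro i j h1 h2 h3 h4 h5 h6 h7 h8 h9 h10 h11 h12 h13 h14
    dsimp only
    split_ifs <;> omega
  have q2 : alENB n σ =
      cnt n (fun i j => σ i < 0 ∧ -σ i < σ j ∧ σ j < j) +
      cnt n (fun i j => i ≤ σ i ∧ σ i < σ j ∧ σ j < j) := by
    rw [hen]
    simp only [cnt_pairs]
    repeat rw [← Finset.sum_add_distrib]
    refine ptw hσ ?_
    intro i j h1 h2 h3 h4 h5 h6 h7 h8 h9 h10 h11 h12 h13 h14
    dsimp only
    split_ifs <;> omega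
  -- (R1) chain
  have e1 : cnt n (fun i j => i < j ∧ j ≤ σ i ∧ j ≤ σ j) +
      cnt n (fun i j => σ i < 0 ∧ j ≤ σ j ∧ j ≤ -σ i) +
      cnt n (fun i j => σ i < i ∧ i < j ∧ j ≤ σ j) +
      cnt n (fun i j => j ≤ σ j ∧ |σ i| < j) =
      cnt n (fun i j => (0 < σ i ∧ σ i < i) ∧ j ≤ σ j ∧ |σ i| < j) +
      cnt n (fun i j => σ i < 0 ∧ j ≤ σ j) +
      cnt n (fun i j => j ≤ σ j ∧ i < j) := by
    simp only [cnt_pairs]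
    repeat rw [← Finset.sum_add_distrib]
    refine ptw hσ ?_
    intro i j h1 h2 h3 h4 h5 h6 h7 h8 h9 h10 h11 h12 h13 h14
    dsimp only
    split_ifs <;> omega
  have e2 : cnt n (fun i j => j ≤ σ j ∧ |σ i| < j) =
      cnt n (fun i j => j ≤ σ j ∧ i < j) :=
    cnt_tau hσ (fun j => j ≤ σ j) (fun j => j)
  -- (R2) chain
  have e3 : cnt n (fun i j => i ≤ σ i ∧ σ i < σ j ∧ σ j < j) +
      cnt n (fun i j => σ i < 0 ∧ -σ i < σ j ∧ σ j < j) +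
      cnt n (fun i j => (0 < σ j ∧ σ j < j) ∧ (0 < σ i ∧ σ i < i) ∧ |σ i| < |σ j|) =
      cnt n (fun i j => (0 < σ j ∧ σ j < j) ∧ |σ i| < |σ j|) := by
    simp only [cnt_pairs]
    repeat rw [← Finset.sum_add_distrib]
    refine ptw hσ ?_
    intro i j h1 h2 h3 h4 h5 h6 h7 h8 h9 h10 h11 h12 h13 h14
    dsimp only
    split_ifs <;> omega
  have e4 : cnt n (fun i j => (0 < σ j ∧ σ j < j) ∧ |σ i| < |σ j|) =
      cnt n (fun i j => (0 < σ j ∧ σ j < j) ∧ i < |σ j|) :=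
    cnt_tau hσ (fun j => 0 < σ j ∧ σ j < j) (fun j => |σ j|)
  -- (R3)
  have e5 : cnt n (fun i j => (0 < σ i ∧ σ i < i) ∧ |σ i| < j) +
      cnt n (fun i j => (0 < σ i ∧ σ i < i) ∧ j < |σ i|) +
      cnt n (fun i j => (0 < σ i ∧ σ i < i) ∧ j = |σ i|) =
      cnt n (fun i j => 0 < σ i ∧ σ i < i) := by
    simp only [cnt_pairs]
    repeat rw [← Finset.sum_add_distrib]
    refine ptw hσ ?_
    intro i j h1 h2 h3 h4 h5 h6 h7 h8 h9 h10 h11 h12 h13 h14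
    dsimp only
    split_ifs <;> omega
  have e5b : cnt n (fun i j => (0 < σ i ∧ σ i < i) ∧ j = |σ i|) =
      cnt1 n (fun i => 0 < σ i ∧ σ i < i) := by
    refine cnt_dg _ (fun i => |σ i|) fun i hi hP => ?_
    have h1 := mem_Icc.mp hi
    rw [mem_Icc, abs_of_pos hP.1]
    omega
  have e6 : cnt n (fun i j => (0 < σ j ∧ σ j < j) ∧ i < |σ j|) =
      cnt n (fun i j => (0 < σ i ∧ σ i < i) ∧ j < |σ i|) :=
    (cnt_swap _).symm
  have e7 : cnt n (fun i j => (0 < σ i ∧ σ i < i) ∧ |σ i| < j) =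
      cnt n (fun i j => (0 < σ i ∧ σ i < i) ∧ j ≤ σ j ∧ |σ i| < j) +
      cnt n (fun i j => (0 < σ i ∧ σ i < i) ∧ σ j < j ∧ |σ i| < j) := by
    simp only [cnt_pairs]
    repeat rw [← Finset.sum_add_distrib]
    refine ptw hσ ?_
    intro i j h1 h2 h3 h4 h5 h6 h7 h8 h9 h10 h11 h12 h13 h14
    dsimp only
    split_ifs <;> omega
  have e8 : cnt n (fun i j => (0 < σ i ∧ σ i < i) ∧ σ j < j ∧ |σ i| < j) +
      cnt n (fun i j => (0 < σ i ∧ σ i < i) ∧ σ j < j ∧ j ≤ |σ i|) =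
      cnt n (fun i j => (0 < σ i ∧ σ i < i) ∧ σ j < j) := by
    simp only [cnt_pairs]
    repeat rw [← Finset.sum_add_distrib]
    refine ptw hσ ?_
    intro i j h1 h2 h3 h4 h5 h6 h7 h8 h9 h10 h11 h12 h13 h14
    dsimp only
    split_ifs <;> omega
  have e9 : cnt n (fun i j => (0 < σ i ∧ σ i < i) ∧ σ j < j ∧ j ≤ |σ i|) +
      cnt n (fun i j => (0 < σ i ∧ σ i < i) ∧ σ j < j ∧ j < i ∧ |σ i| < j) =
      cnt n (fun i j => (0 < σ i ∧ σ i < i) ∧ σ j < j ∧ j < i) := by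
    simp only [cnt_pairs]
    repeat rw [← Finset.sum_add_distrib]
    refine ptw hσ ?_
    intro i j h1 h2 h3 h4 h5 h6 h7 h8 h9 h10 h11 h12 h13 h14
    dsimp only
    split_ifs <;> omega
  have e10 : cnt n (fun i j => j < i ∧ σ i < j ∧ σ j < j) =
      cnt n (fun i j => σ j < j ∧ σ i < 0 ∧ j < i) +
      cnt n (fun i j => (0 < σ i ∧ σ i < i) ∧ σ j < j ∧ j < i ∧ |σ i| < j) := by
    simp only [cnt_pairs]
    repeat rw [← Finset.sum_add_distrib]
    refine ptw hσ ?_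
    intro i j h1 h2 h3 h4 h5 h6 h7 h8 h9 h10 h11 h12 h13 h14
    dsimp only
    split_ifs <;> omega
  have e11 : cnt n (fun i j => (0 < σ i ∧ σ i < i) ∧ σ j < j ∧ j < i) =
      cnt n (fun i j => σ j < 0 ∧ (0 < σ i ∧ σ i < i) ∧ j < i) +
      cnt n (fun i j => (0 < σ j ∧ σ j < j) ∧ (0 < σ i ∧ σ i < i) ∧ j < i) := by
    simp only [cnt_pairs]
    repeat rw [← Finset.sum_add_distrib]
    refine ptw hσ ?_
    intro i j h1 h2 h3 h4 h5 h6 h7 h8 h9 h10 h11 h12 h13 h14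
    dsimp only
    split_ifs <;> omega
  have e12 : cnt n (fun i j => (0 < σ j ∧ σ j < j) ∧ (0 < σ i ∧ σ i < i) ∧ |σ i| < |σ j|) +
      cnt n (fun i j => (0 < σ i ∧ σ i < i) ∧ (0 < σ j ∧ σ j < j) ∧ |σ j| < |σ i|) +
      cnt n (fun i j => (0 < σ i ∧ σ i < i) ∧ (0 < σ j ∧ σ j < j) ∧ i = j) =
      cnt n (fun i j => (0 < σ i ∧ σ i < i) ∧ (0 < σ j ∧ σ j < j)) := by
    simp only [cnt_pairs]
    repeat rw [← Finset.sum_add_distrib]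
    refine ptw hσ ?_
    intro i j h1 h2 h3 h4 h5 h6 h7 h8 h9 h10 h11 h12 h13 h14
    dsimp only
    split_ifs <;> omega
  have e12b : cnt n (fun i j => (0 < σ j ∧ σ j < j) ∧ (0 < σ i ∧ σ i < i) ∧ j < i) +
      cnt n (fun i j => (0 < σ i ∧ σ i < i) ∧ (0 < σ j ∧ σ j < j) ∧ i < j) +
      cnt n (fun i j => (0 < σ i ∧ σ i < i) ∧ (0 < σ j ∧ σ j < j) ∧ i = j) =
      cnt n (fun i j => (0 < σ i ∧ σ i < i) ∧ (0 < σ j ∧ σ j < j)) := by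
    simp only [cnt_pairs]
    repeat rw [← Finset.sum_add_distrib]
    refine ptw hσ ?_
    intro i j h1 h2 h3 h4 h5 h6 h7 h8 h9 h10 h11 h12 h13 h14
    dsimp only
    split_ifs <;> omega
  have e13 : cnt n (fun i j => (0 < σ j ∧ σ j < j) ∧ (0 < σ i ∧ σ i < i) ∧ |σ i| < |σ j|) =
      cnt n (fun i j => (0 < σ i ∧ σ i < i) ∧ (0 < σ j ∧ σ j < j) ∧ |σ j| < |σ i|) :=
    (cnt_swap _).symm
  have e13b : cnt n (fun i j => (0 < σ j ∧ σ j < j) ∧ (0 < σ i ∧ σ i < i) ∧ j < i) =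
      cnt n (fun i j => (0 < σ i ∧ σ i < i) ∧ (0 < σ j ∧ σ j < j) ∧ i < j) :=
    (cnt_swap _).symm
  have e14 : cnt n (fun i j => σ i < i ∧ σ j < 0) =
      cnt n (fun i j => σ i < i ∧ σ j < 0 ∧ i < j) +
      cnt n (fun i j => σ j < 0 ∧ σ i < i ∧ j < i) +
      cnt n (fun i j => σ i < i ∧ σ j < 0 ∧ i = j) := by
    simp only [cnt_pairs]
    repeat rw [← Finset.sum_add_distrib]
    refine ptw hσ ?_
    intro i j h1 h2 h3 h4 h5 h6 h7 h8 h9 h10 h11 h12 h13 h14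
    dsimp only
    split_ifs <;> omega
  have e14b : cnt n (fun i j => σ i < i ∧ σ j < 0 ∧ i = j) =
      cnt1 n (fun i => σ i < 0) := by
    rw [cnt_diag]
    refine cnt1_congr _ _ fun i hi => ?_
    have h1 := mem_Icc.mp hi
    constructor
    · exact fun h => h.2
    · exact fun h => ⟨by omega, h⟩
  have e15 : cnt n (fun i j => σ j < 0 ∧ σ i < i ∧ j < i) =
      cnt n (fun i j => σ i < 0 ∧ σ j < j ∧ i < j) :=
    (cnt_swap _).symm
  have e16 : cnt n (fun i j => σ i < 0 ∧ σ j < j ∧ i < j) =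
      cnt n (fun i j => σ i < 0 ∧ σ j < 0 ∧ i < j) +
      cnt n (fun i j => σ i < 0 ∧ (0 < σ j ∧ σ j < j) ∧ i < j) := by
    simp only [cnt_pairs]
    repeat rw [← Finset.sum_add_distrib]
    refine ptw hσ ?_
    intro i j h1 h2 h3 h4 h5 h6 h7 h8 h9 h10 h11 h12 h13 h14
    dsimp only
    split_ifs <;> omega
  have e17 : cnt n (fun i j => σ j < 0 ∧ (0 < σ i ∧ σ i < i) ∧ j < i) =
      cnt n (fun i j => σ i < 0 ∧ (0 < σ j ∧ σ j < j) ∧ i < j) :=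
    (cnt_swap _).symm
  have e18 : cnt n (fun i j => σ j < j ∧ σ i < 0 ∧ j < i) =
      cnt n (fun i j => σ i < i ∧ σ j < 0 ∧ i < j) :=
    (cnt_swap _).symm
  have e19 : cnt n (fun i j => 0 < σ i ∧ σ i < i) =
      cnt n (fun i j => (0 < σ i ∧ σ i < i) ∧ j ≤ σ j) +
      cnt n (fun i j => (0 < σ i ∧ σ i < i) ∧ σ j < j) := by
    simp only [cnt_pairs]
    repeat rw [← Finset.sum_add_distrib]
    refine ptw hσ ?_
    intro i j h1 h2 h3 h4 h5 h6 h7 h8 h9 h10 h11 h12 h13 h14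
    dsimp only
    split_ifs <;> omega
  have e20 : cnt n (fun i j => σ i < i ∧ j ≤ σ j) =
      cnt n (fun i j => (0 < σ i ∧ σ i < i) ∧ j ≤ σ j) +
      cnt n (fun i j => σ i < 0 ∧ j ≤ σ j) := by
    simp only [cnt_pairs]
    repeat rw [← Finset.sum_add_distrib]
    refine ptw hσ ?_
    intro i j h1 h2 h3 h4 h5 h6 h7 h8 h9 h10 h11 h12 h13 h14
    dsimp only
    split_ifs <;> omega
  have e21 : cnt n (fun i j => σ i < 0 ∧ σ j < 0) =
      cnt n (fun i j => σ i < 0 ∧ σ j < 0 ∧ i < j) +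
      cnt n (fun i j => σ j < 0 ∧ σ i < 0 ∧ j < i) +
      cnt n (fun i j => σ i < 0 ∧ σ j < 0 ∧ i = j) := by
    simp only [cnt_pairs]
    repeat rw [← Finset.sum_add_distrib]
    refine ptw hσ ?_
    intro i j h1 h2 h3 h4 h5 h6 h7 h8 h9 h10 h11 h12 h13 h14
    dsimp only
    split_ifs <;> omega
  have e21b : cnt n (fun i j => σ i < 0 ∧ σ j < 0 ∧ i = j) =
      cnt1 n (fun i => σ i < 0) := by
    rw [cnt_diag]
    exact cnt1_congr _ _ fun i hi => by tauto
  have e21c : cnt n (fun i j => σ i < 0 ∧ σ j < 0 ∧ i < j) =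
      cnt n (fun i j => σ j < 0 ∧ σ i < 0 ∧ j < i) :=
    cnt_swap _
  -- rectangle evaluations
  have e22 : cnt n (fun i j => σ i < 0 ∧ σ j < 0) =
      cnt1 n (fun i => σ i < 0) * cnt1 n (fun i => σ i < 0) := cnt_rect _ _
  have e23 : cnt n (fun i j => σ i < i ∧ j ≤ σ j) =
      cnt1 n (fun i => σ i < i) * cnt1 n (fun i => i ≤ σ i) := cnt_rect _ _
  have e24 : cnt n (fun i j => σ i < i ∧ σ j < 0) =
      cnt1 n (fun i => σ i < i) * cnt1 n (fun i => σ i < 0) := cnt_rect _ _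
  -- one-dimensional counts
  have d1 : cnt1 n (fun i => i ≤ σ i) + cnt1 n (fun i => σ i < i) = n := by
    simp only [cnt1]
    rw [← Finset.sum_add_distrib]
    trans (∑ _i ∈ Icc (1:ℤ) (n:ℤ), (1:ℕ))
    · exact Finset.sum_congr rfl fun i _ => by split_ifs <;> omega
    · rw [Finset.sum_const, smul_eq_mul, mul_one, Int.card_Icc]
      omega
  have d2 : cnt1 n (fun i => σ i < i) =
      cnt1 n (fun i => 0 < σ i ∧ σ i < i) + cnt1 n (fun i => σ i < 0) := by
    simp only [cnt1]
    rw [← Finset.sum_add_distrib]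
    refine Finset.sum_congr rfl fun i hi => ?_
    have hz := sp_ne_zero hσ hi
    have h1 := mem_Icc.mp hi
    split_ifs <;> omega
  have d3 : wexB n σ = cnt1 n (fun i => i ≤ σ i) := by
    unfold wexB
    exact cnt1_filter _
  have d4 : negB n σ = cnt1 n (fun i => σ i < 0) := by
    unfold negB
    exact cnt1_filter _
  have hal : alB n σ = alNestB n σ + alENB n σ + alNEB n σ := rfl
  -- the two key natural-number identities
  have key : alB n σ + crsB n σ + cnt n (fun i j => σ i < 0 ∧ σ j < 0 ∧ i < j) +
      cnt1 n (fun i => σ i < i) =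
      cnt n (fun i j => σ i < i ∧ j ≤ σ j) + cnt n (fun i j => σ i < i ∧ σ j < 0) := by
    omega
  have key2 : 2 * cnt n (fun i j => σ i < 0 ∧ σ j < 0 ∧ i < j) +
      cnt1 n (fun i => σ i < 0) = cnt n (fun i j => σ i < 0 ∧ σ j < 0) := by
    omega
  -- pass to rationals
  have d5 : fwexB n σ = 2 * cnt1 n (fun i => i ≤ σ i) + cnt1 n (fun i => σ i < 0) := by
    unfold fwexB
    rw [d3, d4]
  have hq : ((alB n σ : ℚ) + (crsB n σ : ℚ)) +
      (cnt n (fun i j => σ i < 0 ∧ σ j < 0 ∧ i < j) : ℚ) +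
      (cnt1 n (fun i => σ i < i) : ℚ) =
      (cnt1 n (fun i => σ i < i) : ℚ) * (cnt1 n (fun i => i ≤ σ i) : ℚ) +
      (cnt1 n (fun i => σ i < i) : ℚ) * (cnt1 n (fun i => σ i < 0) : ℚ) := by
    have h := key
    rw [e23, e24] at h
    exact_mod_cast h
  have hq2 : 2 * (cnt n (fun i j => σ i < 0 ∧ σ j < 0 ∧ i < j) : ℚ) +
      (cnt1 n (fun i => σ i < 0) : ℚ) =
      (cnt1 n (fun i => σ i < 0) : ℚ) * (cnt1 n (fun i => σ i < 0) : ℚ) := by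
    have h := key2
    rw [e22] at h
    exact_mod_cast h
  have hq3 : (cnt1 n (fun i => i ≤ σ i) : ℚ) + (cnt1 n (fun i => σ i < i) : ℚ) = (n : ℚ) := by
    exact_mod_cast d1
  rw [d3, d4, d5]
  push_cast
  linear_combination hq - hq2 / 2 +
    ((cnt1 n (fun i => i ≤ σ i) : ℚ) - 1 + (cnt1 n (fun i => σ i < 0) : ℚ)) * hq3
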